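/- Let p and q be real polynomials of degree at most d that satisfy |p(x_j) - q(x_j)| ≤ 2ε at d+1 points x_j chosen from L ≥ d+1 equally spaced points in [-Δ, Δ], Δ ∈ (0,1). Then |p(1) - q(1)| ≤ 2ε·exp(d(1 + log((1+1/Δ)(L-1)/d)))/√(2πd). -/

import Mathlib

open Polynomial Real Finset

-- gap lemma
lemma aux_gap {d : ℕ} {a : ℕ → ℕ} (ha : StrictMonoOn a (Set.Iic d)) :
    ∀ j ≤ d, ∀ i ≤ j, a i + (j - i) ≤ a j := by
  intro j
  induction j with
  | zero =>
    intro _ i hi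
    have : i = 0 := by omega
    subst this; omega
  | succ n ih =>
    intro hj i hi
    rcases Nat.eq_or_lt_of_le hi with h | h
    · subst h; omega
    · have hin : i ≤ n := by omega
      have h1 := ih (by omega) i hin
      have h2 : a n < a (n + 1) := ha (by simp; omega) (by simp; omega) (by omega)
      omega

-- factorial product
lemma aux_prod_fact (d i : ℕ) (hi : i ≤ d) :
    ∏ j ∈ (range (d + 1)).erase i, |(i : ℝ) - j| = ((i.factorial * (d - i).factorial : ℕ) : ℝ) := by
  have hsplit : (range (d + 1)).erase i = range i ∪ Finset.Ico (i + 1) (d + 1) := by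
    ext k; simp [Finset.mem_erase, Finset.mem_range, Finset.mem_Ico]; omega
  have hdisj : Disjoint (range i) (Finset.Ico (i + 1) (d + 1)) := by
    rw [Finset.disjoint_left]; intro k hk hk'
    simp [Finset.mem_range, Finset.mem_Ico] at hk hk'; omega
  rw [hsplit, Finset.prod_union hdisj]
  have h1 : ∏ j ∈ range i, |(i : ℝ) - j| = ((i.factorial : ℕ) : ℝ) := by
    have : ∀ j ∈ range i, |(i : ℝ) - j| = ((i - j : ℕ) : ℝ) := by
      intro j hj
      have hji : j < i := Finset.mem_range.mp hj
      rw [Nat.cast_sub hji.le, abs_of_nonneg]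
      have : (j : ℝ) ≤ i := by exact_mod_cast hji.le
      linarith
    rw [Finset.prod_congr rfl this, ← Nat.cast_prod]
    congr 1
    calc (∏ j ∈ range i, (i - j)) = ∏ j ∈ range i, (i - (i - 1 - j)) := by
          rw [Finset.prod_range_reflect (fun j => i - j) i]
      _ = ∏ j ∈ range i, (j + 1) := by
          apply Finset.prod_congr rfl; intro j hj
          have := Finset.mem_range.mp hj; omega
      _ = i.factorial := Finset.prod_range_add_one_eq_factorial i
  have h2 : ∏ j ∈ Finset.Ico (i + 1) (d + 1), |(i : ℝ) - j| = (((d - i).factorial : ℕ) : ℝ) := by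
    have : ∀ j ∈ Finset.Ico (i + 1) (d + 1), |(i : ℝ) - j| = ((j - i : ℕ) : ℝ) := by
      intro j hj
      have hji : i < j ∧ j ≤ d := by
        have := Finset.mem_Ico.mp hj; omega
      rw [Nat.cast_sub hji.1.le, abs_of_nonpos]
      · ring
      · have : (i : ℝ) ≤ j := by exact_mod_cast hji.1.le
        linarith
    rw [Finset.prod_congr rfl this, ← Nat.cast_prod]
    congr 1
    rw [Finset.prod_Ico_eq_prod_range]
    have : ∀ k ∈ range (d + 1 - (i + 1)), (i + 1 + k - i) = k + 1 := by intro k _; omega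
    rw [Finset.prod_congr rfl this, Finset.prod_range_add_one_eq_factorial]
    congr 1; omega
  rw [h1, h2, ← Nat.cast_mul]

-- Stirling lower bound
lemma aux_stirling (d : ℕ) (hd : 1 ≤ d) :
    Real.sqrt π * (Real.sqrt (2 * d) * ((d : ℝ) / Real.exp 1) ^ d) ≤ (d.factorial : ℝ) := by
  obtain ⟨n, rfl⟩ : ∃ n, d = n + 1 := ⟨d - 1, by omega⟩
  have h1 : Real.sqrt π ≤ Stirling.stirlingSeq (n + 1) := by
    apply Antitone.le_of_tendsto Stirling.stirlingSeq'_antitone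
    exact Stirling.tendsto_stirlingSeq_sqrt_pi.comp (Filter.tendsto_add_atTop_nat 1)
  have hpos : 0 < Real.sqrt (2 * (n + 1 : ℕ)) * (((n + 1 : ℕ) : ℝ) / Real.exp 1) ^ (n + 1) := by
    positivity
  rw [Stirling.stirlingSeq] at h1
  have h2 := (le_div_iff₀ hpos).mp h1
  push_cast at h2 ⊢
  linarith


set_option maxHeartbeats 1000000 in
/-- If two real polynomials of degree at most `d ≥ 1` satisfy `|p(x_j) - q(x_j)| ≤ 2ε`
at `d+1` nodes `x_j = -Δ + (2a_j/(L-1))Δ` chosen from `L ≥ d+1` equally-spaced points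
in `[-Δ, Δ]`, `Δ ∈ (0,1)`, then
`|p(1) - q(1)| ≤ 2ε·exp(d(1 + log((1+1/Δ)(L-1)/d)))/√(2πd)`. -/
theorem lagrange_extrapolation_difference (p q : Polynomial ℝ) (d L : ℕ) (ε Δ : ℝ)
    (a : ℕ → ℕ)
    (hd1 : 1 ≤ d) (hp : p.natDegree ≤ d) (hq : q.natDegree ≤ d) (hL : d + 1 ≤ L)
    (hΔ0 : 0 < Δ) (hΔ1 : Δ < 1)
    (ha : StrictMonoOn a (Set.Iic d)) (haL : ∀ j ≤ d, a j ≤ L - 1)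
    (hb : ∀ j : ℕ, j ≤ d →
      |p.eval (-Δ + (2 * (a j) / (L - 1 : ℝ)) * Δ)
        - q.eval (-Δ + (2 * (a j) / (L - 1 : ℝ)) * Δ)| ≤ 2 * ε) :
    |p.eval 1 - q.eval 1| ≤
      2 * ε * Real.exp (d * (1 + Real.log ((1 + 1 / Δ) * (L - 1 : ℝ) / d))) /
        Real.sqrt (2 * π * d) := by
  classical
  have hd0 : (0:ℝ) < d := by exact_mod_cast hd1
  have hL2 : (2:ℝ) ≤ (L:ℝ) := by exact_mod_cast (by omega : 2 ≤ L)
  have hL1 : (0:ℝ) < (L:ℝ) - 1 := by linarith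
  have hε : 0 ≤ ε := by
    have h := hb 0 (Nat.zero_le d)
    have h0 := abs_nonneg (p.eval (-Δ + (2 * (a 0) / ((L:ℝ) - 1)) * Δ)
      - q.eval (-Δ + (2 * (a 0) / ((L:ℝ) - 1)) * Δ))
    linarith
  set x : ℕ → ℝ := fun j => -Δ + 2 * (a j) / ((L:ℝ) - 1) * Δ with hxdef
  set s : Finset ℕ := Finset.range (d + 1) with hs
  -- node bounds
  have hxabs : ∀ j ≤ d, |x j| ≤ Δ := by
    intro j hj
    have h1 : (a j : ℝ) ≤ (L:ℝ) - 1 := by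
      have := haL j hj
      have : (a j : ℝ) ≤ ((L - 1 : ℕ) : ℝ) := by exact_mod_cast this
      rwa [Nat.cast_sub (by omega), Nat.cast_one] at this
    have h2 : (0:ℝ) ≤ (a j : ℝ) := Nat.cast_nonneg _
    have ht1 : 0 ≤ 2 * (a j : ℝ) / ((L:ℝ) - 1) := by positivity
    have ht2 : 2 * (a j : ℝ) / ((L:ℝ) - 1) ≤ 2 := by
      rw [div_le_iff₀ hL1]; linarith
    rw [abs_le]
    constructor <;> simp only [hxdef] <;> nlinarith
  -- spacing lower bound
  have hAgap : ∀ i ≤ d, ∀ j ≤ d, |(i:ℝ) - j| ≤ |(a i : ℝ) - a j| := by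
    have key : ∀ i ≤ d, ∀ j ≤ d, i < j → (j:ℝ) - i ≤ (a j : ℝ) - a i ∧ (a i : ℝ) ≤ a j := by
      intro i hi j hj hij
      have h := aux_gap ha j hj i hij.le
      constructor
      · have : (a i : ℝ) + ((j:ℝ) - i) ≤ a j := by
          have h2 : ((a i + (j - i) : ℕ) : ℝ) ≤ ((a j : ℕ) : ℝ) := by exact_mod_cast h
          rw [Nat.cast_add, Nat.cast_sub hij.le] at h2
          linarith
        linarith
      · have : a i ≤ a j := by omega
        exact_mod_cast this
    intro i hi j hj
    rcases lt_trichotomy i j with h | h | h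
    · obtain ⟨h1, h2⟩ := key i hi j hj h
      have hij : (i:ℝ) ≤ j := by exact_mod_cast h.le
      rw [abs_of_nonpos (by linarith), abs_of_nonpos (by linarith)]
      linarith
    · subst h; simp
    · obtain ⟨h1, h2⟩ := key j hj i hi h
      have hij : (j:ℝ) ≤ i := by exact_mod_cast h.le
      rw [abs_of_nonneg (by linarith), abs_of_nonneg (by linarith)]
      linarith
  have hc0 : (0:ℝ) < 2 * Δ / ((L:ℝ) - 1) := by positivity
  have hxij : ∀ i ≤ d, ∀ j ≤ d, 2 * Δ / ((L:ℝ) - 1) * |(i:ℝ) - j| ≤ |x i - x j| := by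
    intro i hi j hj
    have hd : x i - x j = 2 * Δ / ((L:ℝ) - 1) * ((a i : ℝ) - a j) := by
      simp only [hxdef]; field_simp; ring
    rw [hd, abs_mul, abs_of_pos hc0]
    exact mul_le_mul_of_nonneg_left (hAgap i hi j hj) hc0.le
  have hinj : Set.InjOn x ↑s := by
    intro i hi j hj hxy
    by_contra hne
    have hi' : i ≤ d := by simp [hs] at hi; omega
    have hj' : j ≤ d := by simp [hs] at hj; omega
    have h1 := hxij i hi' j hj'
    rw [hxy, sub_self, abs_zero] at h1
    have h2 : (0:ℝ) < |(i:ℝ) - j| := by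
      rw [abs_pos, sub_ne_zero]
      exact_mod_cast hne
    nlinarith
  set f : Polynomial ℝ := p - q with hf
  have hdeg : f.degree < (s.card : WithBot ℕ) := by
    rw [hs, Finset.card_range]
    calc f.degree ≤ (f.natDegree : WithBot ℕ) := degree_le_natDegree
      _ ≤ (d : WithBot ℕ) := by
          exact_mod_cast le_trans (natDegree_sub_le p q) (max_le hp hq)
      _ < ((d + 1 : ℕ) : WithBot ℕ) := by exact_mod_cast Nat.lt_succ_self d
  have hkey : f.eval 1 = ∑ i ∈ s, f.eval (x i) *
      ∏ j ∈ s.erase i, ((x i - x j)⁻¹ * (1 - x j)) := by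
    conv_lhs => rw [Lagrange.eq_interpolate hinj hdeg]
    simp [Lagrange.interpolate_apply, Polynomial.eval_finset_sum, Lagrange.basis,
      Polynomial.eval_prod, Lagrange.basisDivisor]
  -- constants
  set C0 : ℝ := (1 + Δ) * ((L:ℝ) - 1) / (2 * Δ) with hC0
  have hC0pos : 0 < C0 := by rw [hC0]; positivity
  -- per term bound
  have hterm : ∀ i ∈ s, |f.eval (x i)| * ∏ j ∈ s.erase i, |(x i - x j)⁻¹ * (1 - x j)|
      ≤ 2 * ε * (C0 ^ d * ((i.factorial * (d - i).factorial : ℕ) : ℝ)⁻¹) := by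
    intro i hi
    have hi' : i ≤ d := by simp [hs] at hi; omega
    have hprod : ∏ j ∈ s.erase i, |(x i - x j)⁻¹ * (1 - x j)|
        ≤ ∏ j ∈ s.erase i, C0 * |(i:ℝ) - j|⁻¹ := by
      apply Finset.prod_le_prod (fun j _ => abs_nonneg _)
      intro j hj
      have hj' : j ≤ d := by simp [hs, Finset.mem_erase] at hj; omega
      have hne : j ≠ i := (Finset.mem_erase.mp hj).1
      have hijpos : (0:ℝ) < |(i:ℝ) - j| := by
        rw [abs_pos, sub_ne_zero]
        exact fun h => hne (by exact_mod_cast h.symm)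
      have hxpos : (0:ℝ) < |x i - x j| :=
        lt_of_lt_of_le (by positivity) (hxij i hi' j hj')
      rw [abs_mul, abs_inv]
      have h1 : |x i - x j|⁻¹ ≤ (2 * Δ / ((L:ℝ) - 1) * |(i:ℝ) - j|)⁻¹ :=
        inv_anti₀ (by positivity) (hxij i hi' j hj')
      have h2 : |1 - x j| ≤ 1 + Δ := by
        have := hxabs j hj'
        rw [abs_le] at this ⊢
        constructor <;> nlinarith
      calc |x i - x j|⁻¹ * |1 - x j|
          ≤ (2 * Δ / ((L:ℝ) - 1) * |(i:ℝ) - j|)⁻¹ * (1 + Δ) := by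
            apply mul_le_mul h1 h2 (abs_nonneg _) (by positivity)
        _ = C0 * |(i:ℝ) - j|⁻¹ := by
            rw [mul_inv, hC0]
            field_simp
    have hprod2 : ∏ j ∈ s.erase i, C0 * |(i:ℝ) - j|⁻¹
        = C0 ^ d * ((i.factorial * (d - i).factorial : ℕ) : ℝ)⁻¹ := by
      rw [Finset.prod_mul_distrib, Finset.prod_const,
        Finset.card_erase_of_mem hi, hs, Finset.card_range]
      simp only [Nat.add_sub_cancel]
      congr 1
      rw [← aux_prod_fact d i hi']
      exact Finset.prod_inv_distrib _
    have hval : |f.eval (x i)| ≤ 2 * ε := by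
      simpa [hf, hxdef] using hb i hi'
    exact mul_le_mul hval (hprod.trans_eq hprod2)
      (Finset.prod_nonneg fun j _ => abs_nonneg _) (by linarith)
  -- sum of inverse factorial products
  have hsum : ∑ i ∈ s, ((i.factorial * (d - i).factorial : ℕ) : ℝ)⁻¹
      = 2 ^ d / (d.factorial : ℝ) := by
    have hcongr : ∀ i ∈ s, ((i.factorial * (d - i).factorial : ℕ) : ℝ)⁻¹
        = (d.choose i : ℝ) / (d.factorial : ℝ) := by
      intro i hi
      have hi' : i ≤ d := by simp [hs] at hi; omega
      have h := Nat.choose_mul_factorial_mul_factorial hi'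
      have hne1 : ((i.factorial * (d - i).factorial : ℕ) : ℝ) ≠ 0 := by
        positivity
      have hne2 : ((d.factorial : ℕ) : ℝ) ≠ 0 := by positivity
      field_simp
      push_cast
      rw [mul_comm, ← mul_assoc]
      exact_mod_cast h.symm
    rw [Finset.sum_congr rfl hcongr, ← Finset.sum_div]
    congr 1
    rw [hs]
    exact_mod_cast Nat.sum_range_choose d
  -- main estimate
  have hmain : |f.eval 1| ≤ 2 * ε * (((1 + 1/Δ) * ((L:ℝ) - 1)) ^ d / (d.factorial : ℝ)) := by
    rw [hkey]
    calc |∑ i ∈ s, f.eval (x i) * ∏ j ∈ s.erase i, ((x i - x j)⁻¹ * (1 - x j))|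
        ≤ ∑ i ∈ s, |f.eval (x i) * ∏ j ∈ s.erase i, ((x i - x j)⁻¹ * (1 - x j))| :=
          Finset.abs_sum_le_sum_abs _ _
      _ = ∑ i ∈ s, |f.eval (x i)| * ∏ j ∈ s.erase i, |(x i - x j)⁻¹ * (1 - x j)| := by
          simp [abs_mul, Finset.abs_prod]
      _ ≤ ∑ i ∈ s, 2 * ε * (C0 ^ d * ((i.factorial * (d - i).factorial : ℕ) : ℝ)⁻¹) :=
          Finset.sum_le_sum hterm
      _ = 2 * ε * C0 ^ d * ∑ i ∈ s, ((i.factorial * (d - i).factorial : ℕ) : ℝ)⁻¹ := by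
          rw [Finset.mul_sum]; apply Finset.sum_congr rfl; intro i _; ring
      _ = 2 * ε * C0 ^ d * (2 ^ d / (d.factorial : ℝ)) := by rw [hsum]
      _ = 2 * ε * (((1 + 1/Δ) * ((L:ℝ) - 1)) ^ d / (d.factorial : ℝ)) := by
          have : C0 ^ d * 2 ^ d = ((1 + 1/Δ) * ((L:ℝ) - 1)) ^ d := by
            rw [← mul_pow]
            congr 1
            rw [hC0]
            field_simp
            ring
          rw [div_eq_mul_inv, ← mul_assoc, mul_assoc (2*ε), this]
          ring
  -- Stirling step
  set M : ℝ := (1 + 1/Δ) * ((L:ℝ) - 1) with hM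
  have hMpos : 0 < M := by rw [hM]; positivity
  have hstir := aux_stirling d hd1
  have hSpos : 0 < Real.sqrt π * (Real.sqrt (2 * d) * ((d:ℝ) / Real.exp 1) ^ d) := by
    positivity
  have hfactpos : (0:ℝ) < (d.factorial : ℝ) := by positivity
  have hfinal : M ^ d / (d.factorial : ℝ)
      ≤ Real.exp (d * (1 + Real.log (M / d))) / Real.sqrt (2 * π * d) := by
    have h1 : M ^ d / (d.factorial : ℝ)
        ≤ M ^ d / (Real.sqrt π * (Real.sqrt (2 * d) * ((d:ℝ) / Real.exp 1) ^ d)) :=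
      div_le_div_of_nonneg_left (by positivity) hSpos hstir
    have h2 : Real.exp (d * (1 + Real.log (M / d)))
        = Real.exp 1 ^ d * (M / d) ^ d := by
      have hMd : 0 < M / d := by positivity
      have hd' : Real.exp (d:ℝ) = Real.exp 1 ^ d := by rw [← Real.exp_nat_mul, mul_one]
      rw [mul_add, mul_one, Real.exp_add, Real.exp_nat_mul, Real.exp_log hMd, hd']
    have h3 : Real.sqrt (2 * π * d) = Real.sqrt π * Real.sqrt (2 * d) := by
      rw [← Real.sqrt_mul Real.pi_pos.le]
      congr 1; ring
    rw [h2, h3]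
    apply h1.trans_eq
    have e1 : Real.sqrt π ≠ 0 := by positivity
    have e2 : Real.sqrt (2 * (d:ℝ)) ≠ 0 := by positivity
    have e3 : Real.exp 1 ≠ 0 := Real.exp_ne_zero 1
    have e4 : (d:ℝ) ≠ 0 := ne_of_gt hd0
    rw [div_pow, div_pow]
    field_simp
  have hfeval : f.eval 1 = p.eval 1 - q.eval 1 := by simp [hf]
  rw [← hfeval]
  calc |f.eval 1| ≤ 2 * ε * (M ^ d / (d.factorial : ℝ)) := hmain
    _ ≤ 2 * ε * (Real.exp (d * (1 + Real.log (M / d))) / Real.sqrt (2 * π * d)) :=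
        mul_le_mul_of_nonneg_left hfinal (by linarith)
    _ = 2 * ε * Real.exp (d * (1 + Real.log ((1 + 1/Δ) * ((L:ℝ) - 1) / d))) /
        Real.sqrt (2 * π * d) := by rw [hM]; ring
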